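/- Let p be an odd prime, n ≥ 1, and let A ⊆ 𝔽_p^n be the zero set of the quadratic form x ↦ xᵀx. Let Ψ = (ψ₁,…,ψ_t) be a system of 𝔽_p-linear forms, each mapping (𝔽_p^n)^D → 𝔽_p^n, and let k be the dimension of the 𝔽_p-span of the quadratic functions x ↦ ψᵢ(x)ᵀψᵢ(x) on (𝔽_p^n)^D for i = 1,…,t. Then |T_Ψ(1_A) − p^{−k}| ≤ p^{−n/2}. -/

import Mathlib

open Finset

section
variable {p t D : ℕ} [Fact p.Prime] (c : Fin t → Fin D → ZMod p)

lemma addChar_sum {ι : Type*} (s : Finset ι) (f : ι → ZMod p) :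
    ZMod.stdAddChar (∑ i ∈ s, f i) = ∏ i ∈ s, ZMod.stdAddChar (f i) := by
  classical
  induction s using Finset.induction_on with
  | empty => simp
  | insert _ _ h ih => rw [Finset.sum_insert h, Finset.prod_insert h, AddChar.map_add_eq_mul, ih]

lemma sum_e_mul (a : ZMod p) :
    ∑ lam : ZMod p, ZMod.stdAddChar (lam * a) = if a = 0 then (p:ℂ) else 0 := by
  classical
  rw [AddChar.sum_mulShift a (ZMod.isPrimitive_stdAddChar p)]
  simp [ZMod.card]

lemma sum_e_pi (m : Fin D → ZMod p) :
    ∑ y : Fin D → ZMod p, ZMod.stdAddChar (∑ d, y d * m d)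
      = if ∀ d, m d = 0 then (p:ℂ)^D else 0 := by
  classical
  simp_rw [addChar_sum]
  rw [← Fintype.prod_sum (fun (d : Fin D) (u : ZMod p) => ZMod.stdAddChar (u * m d))]
  simp_rw [sum_e_mul]
  by_cases h : ∀ d, m d = 0
  · simp [h, prod_const]
  · push_neg at h
    obtain ⟨d0, hd0⟩ := h
    rw [if_neg (by push_neg; exact ⟨d0, hd0⟩)]
    exact Finset.prod_eq_zero (mem_univ d0) (by rw [if_neg hd0])

lemma abs_e (x : ZMod p) : ‖(ZMod.stdAddChar x : ℂ)‖ = 1 := by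
  rw [ZMod.stdAddChar_apply]; exact Circle.norm_coe _

lemma conj_e (x : ZMod p) :
    (starRingEnd ℂ) (ZMod.stdAddChar x) = ZMod.stdAddChar (-x) := by
  have h : (0:ℕ) < ringChar (ZMod p) := by
    rw [ZMod.ringChar_zmod_n]; exact (Fact.out : p.Prime).pos
  rw [AddChar.starComp_apply h, AddChar.inv_apply]

/-- linear form -/
def lf (i : Fin t) (y : Fin D → ZMod p) : ZMod p := ∑ d, c i d * y d

/-- the quadratic form on `𝔽_p^D` -/
def qt (a : Fin t → ZMod p) (y : Fin D → ZMod p) : ZMod p := ∑ i, a i * lf c i y ^ 2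

noncomputable def tt (a : Fin t → ZMod p) : ℂ :=
  ∑ y : Fin D → ZMod p, ZMod.stdAddChar (qt c a y)

def mm (a : Fin t → ZMod p) (d : Fin D) (h : Fin D → ZMod p) : ZMod p :=
  2 * ∑ i, a i * c i d * lf c i h

lemma lf_add (i : Fin t) (y h : Fin D → ZMod p) : lf c i (y + h) = lf c i y + lf c i h := by
  simp [lf, Pi.add_apply, mul_add, Finset.sum_add_distrib]

lemma hB' (a : Fin t → ZMod p) (g : Fin t → ZMod p) (y : Fin D → ZMod p) :
    ∑ d, y d * (2 * ∑ i, a i * c i d * g i) = ∑ i, 2 * a i * g i * lf c i y := by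
  simp only [lf]
  simp_rw [Finset.mul_sum]
  rw [Finset.sum_comm]
  exact Finset.sum_congr rfl fun i _ => Finset.sum_congr rfl fun d _ => by ring

lemma hB (a : Fin t → ZMod p) (y h : Fin D → ZMod p) :
    ∑ d, y d * mm c a d h = ∑ i, 2 * a i * lf c i h * lf c i y := by
  simp only [mm]
  exact hB' c a (fun i => lf c i h) y

lemma qt_shift (a : Fin t → ZMod p) (y h : Fin D → ZMod p) :
    qt c a (y + h) = qt c a y + (qt c a h + ∑ d, y d * mm c a d h) := by
  rw [hB]
  simp only [qt, lf_add]
  rw [← Finset.sum_add_distrib, ← Finset.sum_add_distrib]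
  exact Finset.sum_congr rfl fun i _ => by ring

lemma qt_zero (a : Fin t → ZMod p) : qt c a 0 = 0 := by
  simp [qt, lf]

lemma card_Z (hp : Odd p) (a : Fin t → ZMod p) (hQa : ¬ ∀ y, qt c a y = 0) :
    (univ.filter (fun h : Fin D → ZMod p => ∀ d, mm c a d h = 0)).card * p ≤ p ^ D := by
  classical
  set A : Matrix (Fin D) (Fin D) (ZMod p) := Matrix.of (fun d d' => 2 * ∑ i, a i * c i d * c i d') with hA
  have hmv : ∀ (h : Fin D → ZMod p) (d : Fin D), A.mulVec h d = mm c a d h := by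
    intro h d
    simp only [Matrix.mulVec, dotProduct, hA, Matrix.of_apply, mm, lf]
    simp_rw [Finset.mul_sum, Finset.sum_mul]
    rw [Finset.sum_comm]
    exact Finset.sum_congr rfl fun i _ => Finset.sum_congr rfl fun d' _ => by ring
  set M := A.mulVecLin with hM
  have h2 : (2 : ZMod p) ≠ 0 := by
    have : ((2:ℕ) : ZMod p) ≠ 0 := by
      rw [Ne, ZMod.natCast_eq_zero_iff]
      intro hdvd
      have hp2 : p = 2 := (Nat.prime_dvd_prime_iff_eq (Fact.out : p.Prime) Nat.prime_two).mp hdvd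
      have := Nat.odd_iff.mp hp
      omega
    simpa using this
  have hMne : M ≠ 0 := by
    intro h0
    apply hQa
    intro y
    have hz : ∑ d, y d * mm c a d y = 0 := by
      apply Finset.sum_eq_zero
      intro d _
      rw [← hmv]
      have : A.mulVec y = 0 := by rw [← Matrix.mulVecLin_apply, ← hM, h0]; rfl
      rw [this]
      simp
    rw [hB] at hz
    have h2q : (2 : ZMod p) * qt c a y = 0 := by
      rw [qt, Finset.mul_sum, ← hz]
      exact Finset.sum_congr rfl fun i _ => by ring
    rcases mul_eq_zero.mp h2q with h | h
    · exact absurd h h2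
    · exact h
  have hker : LinearMap.ker M ≠ ⊤ := fun h => hMne (LinearMap.ker_eq_top.mp h)
  have hlt : Module.finrank (ZMod p) (LinearMap.ker M) < D := by
    have := Submodule.finrank_lt (K := ZMod p) (V := Fin D → ZMod p) hker
    rwa [Module.finrank_pi, Fintype.card_fin] at this
  have hcard : (univ.filter (fun h : Fin D → ZMod p => ∀ d, mm c a d h = 0)).card
      = Fintype.card (LinearMap.ker M) := by
    rw [← Fintype.card_subtype]
    apply Fintype.card_congr
    apply Equiv.subtypeEquivRight
    intro h
    rw [LinearMap.mem_ker]
    constructor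
    · intro hh; ext d; rw [Matrix.mulVecLin_apply, hmv, hh d]; rfl
    · intro hh d; rw [← hmv, ← Matrix.mulVecLin_apply, ← hM, hh]; rfl
  rw [hcard, Module.card_eq_pow_finrank (K := ZMod p), ZMod.card, ← pow_succ]
  exact Nat.pow_le_pow_right (Fact.out : p.Prime).pos hlt

lemma gauss_sq (hp : Odd p) (a : Fin t → ZMod p) (hQa : ¬ ∀ y, qt c a y = 0) :
    ‖tt c a‖ ^ 2 * p ≤ (p:ℝ) ^ (2 * D) := by
  classical
  set e := (ZMod.stdAddChar (N := p)) with he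
  have key : tt c a * (starRingEnd ℂ) (tt c a)
      = ∑ h ∈ univ.filter (fun h : Fin D → ZMod p => ∀ d, mm c a d h = 0),
          e (qt c a h) * (p:ℂ)^D := by
    rw [tt, map_sum]
    simp_rw [conj_e]
    rw [Finset.sum_mul_sum]
    have step1 : ∀ y z : Fin D → ZMod p,
        e (qt c a z) * e (-qt c a y) = e (qt c a z - qt c a y) := by
      intro y z
      rw [← AddChar.map_add_eq_mul, sub_eq_add_neg]
    calc ∑ z : Fin D → ZMod p, ∑ y : Fin D → ZMod p, e (qt c a z) * e (-qt c a y)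
        = ∑ y : Fin D → ZMod p, ∑ z : Fin D → ZMod p, e (qt c a z - qt c a y) := by
          rw [Finset.sum_comm]
          exact Finset.sum_congr rfl fun y _ => Finset.sum_congr rfl fun z _ => step1 y z
      _ = ∑ y : Fin D → ZMod p, ∑ h : Fin D → ZMod p, e (qt c a (y + h) - qt c a y) := by
          refine Finset.sum_congr rfl fun y _ => ?_
          exact (Fintype.sum_equiv (Equiv.addLeft y)
            (fun h => e (qt c a (y + h) - qt c a y))
            (fun z => e (qt c a z - qt c a y)) (fun h => rfl)).symm
      _ = ∑ h : Fin D → ZMod p, e (qt c a h) * ∑ y : Fin D → ZMod p, e (∑ d, y d * mm c a d h) := by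
          rw [Finset.sum_comm]
          refine Finset.sum_congr rfl fun h _ => ?_
          rw [Finset.mul_sum]
          refine Finset.sum_congr rfl fun y _ => ?_
          rw [qt_shift c a y h, ← AddChar.map_add_eq_mul]
          congr 1
          ring
      _ = ∑ h ∈ univ.filter (fun h : Fin D → ZMod p => ∀ d, mm c a d h = 0),
            e (qt c a h) * (p:ℂ)^D := by
          rw [Finset.sum_filter]
          refine Finset.sum_congr rfl fun h _ => ?_
          rw [sum_e_pi]
          split_ifs <;> simp
  have habs : ‖tt c a‖ ^ 2
      ≤ ((univ.filter (fun h : Fin D → ZMod p => ∀ d, mm c a d h = 0)).card : ℝ) * (p:ℝ)^D := by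
    have h1 : (‖tt c a‖)^2 = ‖tt c a * (starRingEnd ℂ) (tt c a)‖ := by
      rw [norm_mul, Complex.norm_conj, sq]
    rw [h1, key]
    refine le_trans (norm_sum_le _ _) ?_
    rw [← nsmul_eq_mul]
    refine le_trans (Finset.sum_le_card_nsmul _ _ ((p:ℝ)^D) ?_) le_rfl
    intro h _
    rw [norm_mul]
    have : ‖e (qt c a h)‖ = 1 := abs_e _
    rw [this, one_mul, norm_pow, Complex.norm_natCast]
  have hZ := card_Z c hp a hQa
  calc ‖tt c a‖ ^ 2 * p
      ≤ (((univ.filter (fun h : Fin D → ZMod p => ∀ d, mm c a d h = 0)).card : ℝ) * (p:ℝ)^D) * p := by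
        apply mul_le_mul_of_nonneg_right habs (by positivity)
    _ = (((univ.filter (fun h : Fin D → ZMod p => ∀ d, mm c a d h = 0)).card * p : ℕ) : ℝ) * (p:ℝ)^D := by
        push_cast; ring
    _ ≤ ((p^D : ℕ) : ℝ) * (p:ℝ)^D := by
        apply mul_le_mul_of_nonneg_right _ (by positivity)
        exact_mod_cast hZ
    _ = (p:ℝ) ^ (2*D) := by
        push_cast
        rw [two_mul, pow_add]

end


/-- The solution-counting operator `T_Ψ(f)` for the system of linear forms
`ψ_i(x_1,…,x_D) = ∑_d c i d • x_d`. -/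
noncomputable def linT {p : ℕ} [NeZero p] {t D : ℕ} (n : ℕ)
    (c : Fin t → Fin D → ZMod p) (f : (Fin n → ZMod p) → ℂ) : ℂ :=
  ((p : ℂ) ^ (n * D))⁻¹ * ∑ x : Fin D → Fin n → ZMod p,
    ∏ i : Fin t, f (fun j => ∑ d, c i d * x d j)

/-- Let `A ⊆ 𝔽_p^n` be the zero set of `x ↦ xᵀx` (`p` odd) and let `k` be the dimension
of the `𝔽_p`-span of the quadratic functions `x ↦ ψ_i(x)ᵀψ_i(x)` on `(𝔽_p^n)^D`.
Then `|T_Ψ(1_A) − p^{−k}| ≤ p^{−n/2}`. -/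
theorem quadratic_level_set_count (p : ℕ) [Fact p.Prime] (hp : Odd p)
    (n : ℕ) (hn : 1 ≤ n) (t D : ℕ) (c : Fin t → Fin D → ZMod p) (k : ℕ)
    (hk : k = Module.finrank (ZMod p) (Submodule.span (ZMod p)
      (Set.range (fun i : Fin t =>
        (fun x : Fin D → Fin n → ZMod p => ∑ j, (∑ d, c i d * x d j) ^ 2 :
          (Fin D → Fin n → ZMod p) → ZMod p))))) :
    ‖linT n c (fun v => if ∑ j, v j ^ 2 = 0 then 1 else 0) - ((p : ℂ) ^ k)⁻¹‖
      ≤ (p : ℝ) ^ (-(n : ℝ) / 2) := by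
  classical
  have hP : p.Prime := Fact.out
  have hpC : (p:ℂ) ≠ 0 := Nat.cast_ne_zero.mpr hP.pos.ne'
  have hp0 : (0:ℝ) < (p:ℝ) := by exact_mod_cast hP.pos
  set e := (ZMod.stdAddChar (N := p)) with he
  set q : Fin t → (Fin D → Fin n → ZMod p) → ZMod p :=
    fun i x => ∑ j, (∑ d, c i d * x d j) ^ 2 with hq
  set φ := Fintype.linearCombination (ZMod p) q with hphi
  have hkk : k = Module.finrank (ZMod p) (LinearMap.range φ) := by
    rw [hk, hphi, Fintype.range_linearCombination]
  have hrank : Module.finrank (ZMod p) (LinearMap.range φ)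
      + Module.finrank (ZMod p) (LinearMap.ker φ) = t := by
    rw [LinearMap.finrank_range_add_finrank_ker, Module.finrank_pi, Fintype.card_fin]
  have hkt : k ≤ t := by omega
  have hkerrank : Module.finrank (ZMod p) (LinearMap.ker φ) = t - k := by omega
  have hphi0 : ∀ lam : Fin t → ZMod p, φ lam = 0 ↔ ∀ x, ∑ i, lam i * q i x = 0 := by
    intro lam
    rw [funext_iff]
    apply forall_congr'
    intro x
    rw [hphi]
    simp [Fintype.linearCombination_apply, Finset.sum_apply, Pi.smul_apply, smul_eq_mul]
  have hKcard : (univ.filter (fun lam : Fin t → ZMod p => φ lam = 0)).card = p ^ (t - k) := by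
    rw [← Fintype.card_subtype]
    rw [Fintype.card_congr (Equiv.subtypeEquivRight
      (fun lam => (LinearMap.mem_ker (f := φ)).symm) :
        {lam // φ lam = 0} ≃ {lam // lam ∈ LinearMap.ker φ})]
    rw [Module.card_eq_pow_finrank (K := ZMod p), ZMod.card, hkerrank]
  have hind : ∀ a : ZMod p, (if a = 0 then (1:ℂ) else 0) = (p:ℂ)⁻¹ * ∑ lam : ZMod p, e (lam * a) := by
    intro a
    rw [he, sum_e_mul]
    split_ifs with h
    · rw [inv_mul_cancel₀ hpC]
    · rw [mul_zero]
  have hsplit : ∀ (lam : Fin t → ZMod p) (x : Fin D → Fin n → ZMod p),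
      ∑ i, lam i * q i x = ∑ j, qt c lam (fun d => x d j) := by
    intro lam x
    simp only [hq, qt, lf]
    simp_rw [Finset.mul_sum]
    exact Finset.sum_comm
  have hstepA : linT n c (fun v => if ∑ j, v j ^ 2 = 0 then (1:ℂ) else 0)
      = ((p:ℂ)^(n*D))⁻¹ * (((p:ℂ)⁻¹)^t
          * ∑ lam : Fin t → ZMod p, ∑ x : Fin D → Fin n → ZMod p, e (∑ i, lam i * q i x)) := by
    rw [linT]
    congr 1
    calc ∑ x : Fin D → Fin n → ZMod p,
          ∏ i, (if ∑ j, (∑ d, c i d * x d j)^2 = 0 then (1:ℂ) else 0)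
        = ∑ x : Fin D → Fin n → ZMod p, ∏ i, ((p:ℂ)⁻¹ * ∑ lam : ZMod p, e (lam * q i x)) := by
          refine Finset.sum_congr rfl fun x _ => Finset.prod_congr rfl fun i _ => ?_
          exact hind (q i x)
      _ = ∑ x : Fin D → Fin n → ZMod p,
            (((p:ℂ)⁻¹)^t * ∏ i, ∑ lam : ZMod p, e (lam * q i x)) := by
          refine Finset.sum_congr rfl fun x _ => ?_
          rw [Finset.prod_mul_distrib, Finset.prod_const, Finset.card_univ, Fintype.card_fin]
      _ = ((p:ℂ)⁻¹)^t * ∑ x : Fin D → Fin n → ZMod p, ∏ i, ∑ lam : ZMod p, e (lam * q i x) := by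
          rw [Finset.mul_sum]
      _ = ((p:ℂ)⁻¹)^t * ∑ x : Fin D → Fin n → ZMod p,
            ∑ lam : Fin t → ZMod p, ∏ i, e (lam i * q i x) := by
          congr 1
          exact Finset.sum_congr rfl fun x _ => Fintype.prod_sum _
      _ = ((p:ℂ)⁻¹)^t * ∑ lam : Fin t → ZMod p,
            ∑ x : Fin D → Fin n → ZMod p, ∏ i, e (lam i * q i x) := by
          rw [Finset.sum_comm]
      _ = ((p:ℂ)⁻¹)^t * ∑ lam : Fin t → ZMod p,
            ∑ x : Fin D → Fin n → ZMod p, e (∑ i, lam i * q i x) := by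
          congr 1
          refine Finset.sum_congr rfl fun lam _ => Finset.sum_congr rfl fun x _ => ?_
          rw [he, addChar_sum]
  have hK_T : ∀ lam : Fin t → ZMod p, φ lam = 0 → tt c lam = (p:ℂ)^D := by
    intro lam hlam
    have hqt0 : ∀ y, qt c lam y = 0 := by
      intro y
      have hx := (hphi0 lam).mp hlam (fun d j' => if j' = (⟨0, hn⟩ : Fin n) then y d else 0)
      rw [hsplit lam] at hx
      rw [Finset.sum_eq_single (⟨0, hn⟩ : Fin n)] at hx
      · simpa using hx
      · intro j _ hj
        have hcol : (fun d => if j = (⟨0, hn⟩ : Fin n) then y d else 0)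
            = (0 : Fin D → ZMod p) := by
          funext d; rw [if_neg hj]; rfl
        rw [hcol, qt_zero]
      · intro hmem; exact absurd (Finset.mem_univ _) hmem
    rw [tt]
    simp_rw [hqt0, AddChar.map_zero_eq_one]
    simp [Finset.card_univ, Fintype.card_fun, ZMod.card]
  have hK_not : ∀ lam : Fin t → ZMod p, ¬ φ lam = 0 → ¬ ∀ y, qt c lam y = 0 := by
    intro lam hlam hall
    apply hlam
    rw [hphi0]
    intro x
    rw [hsplit lam]
    exact Finset.sum_eq_zero fun j _ => hall _
  have hfact : ∀ lam : Fin t → ZMod p,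
      (∑ x : Fin D → Fin n → ZMod p, e (∑ i, lam i * q i x)) = (tt c lam)^n := by
    intro lam
    simp_rw [hsplit lam, he, addChar_sum]
    rw [← Equiv.sum_comp (Equiv.piComm (fun (_ : Fin n) (_ : Fin D) => ZMod p))
        (fun x : Fin D → Fin n → ZMod p =>
          ∏ j, ZMod.stdAddChar (qt c lam (fun d => x d j)))]
    rw [tt, Fintype.sum_pow]
    rfl
  have hid : ((p:ℂ)^(n*D))⁻¹ * (((p:ℂ)⁻¹)^t * ((p:ℕ):ℂ)^(t-k) * ((p:ℂ)^D)^n) = ((p:ℂ)^k)⁻¹ := by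
    push_cast
    rw [← pow_mul, Nat.mul_comm D n, inv_pow]
    have hsplit_t : (p:ℂ)^t = (p:ℂ)^(t-k) * (p:ℂ)^k := by
      rw [← pow_add]
      congr 1
      omega
    rw [hsplit_t]
    field_simp
  have hdiff : linT n c (fun v => if ∑ j, v j ^ 2 = 0 then (1:ℂ) else 0) - ((p:ℂ)^k)⁻¹
      = ((p:ℂ)^(n*D))⁻¹ * (((p:ℂ)⁻¹)^t
          * ∑ lam ∈ univ.filter (fun lam : Fin t → ZMod p => ¬ φ lam = 0), tt c lam ^ n) := by
    rw [hstepA]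
    have hsc : ∀ lam : Fin t → ZMod p,
        (∑ x : Fin D → Fin n → ZMod p, e (∑ i, lam i * q i x)) = tt c lam ^ n := hfact
    rw [Finset.sum_congr rfl (fun lam _ => hsc lam)]
    rw [← Finset.sum_filter_add_sum_filter_not univ (fun lam : Fin t → ZMod p => φ lam = 0)]
    have hsum0 : ∑ lam ∈ univ.filter (fun lam : Fin t → ZMod p => φ lam = 0), tt c lam ^ n
        = ((p:ℕ):ℂ)^(t-k) * ((p:ℂ)^D)^n := by
      rw [Finset.sum_congr rfl (fun lam hlam =>
        by rw [hK_T lam (Finset.mem_filter.mp hlam).2])]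
      rw [Finset.sum_const, hKcard, nsmul_eq_mul]
      push_cast
      ring
    rw [hsum0]
    linear_combination hid
  rw [hdiff, norm_mul, norm_mul]
  have habs1 : ‖((p:ℂ)^(n*D))⁻¹‖ = ((p:ℝ)^(n*D))⁻¹ := by
    rw [norm_inv, norm_pow, Complex.norm_natCast]
  have habs2 : ‖((p:ℂ)⁻¹)^t‖ = ((p:ℝ)⁻¹)^t := by
    rw [norm_pow, norm_inv, Complex.norm_natCast]
  rw [habs1, habs2]
  set B : ℝ := (p:ℝ) ^ (((((2*D:ℕ)):ℝ) - 1)/2) with hBdef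
  have hB0 : 0 ≤ B := (Real.rpow_pos_of_pos hp0 _).le
  have hsumb : ‖∑ lam ∈ univ.filter
        (fun lam : Fin t → ZMod p => ¬ φ lam = 0), tt c lam ^ n‖
      ≤ ((p:ℝ)^t) * B^n := by
    refine le_trans (norm_sum_le _ _) ?_
    have helem : ∀ lam ∈ univ.filter (fun lam : Fin t → ZMod p => ¬ φ lam = 0),
        ‖tt c lam ^ n‖ ≤ B^n := by
      intro lam hlam
      rw [norm_pow]
      apply pow_le_pow_left₀ (norm_nonneg _) _ n
      have hg := gauss_sq c hp lam (hK_not lam (Finset.mem_filter.mp hlam).2)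
      have h1 : ‖tt c lam‖^2 ≤ (p:ℝ) ^ ((((2*D:ℕ)):ℝ) - 1) := by
        rw [Real.rpow_sub hp0, Real.rpow_natCast, Real.rpow_one, le_div_iff₀ hp0]
        exact hg
      calc ‖tt c lam‖
          = Real.sqrt (‖tt c lam‖^2) :=
            (Real.sqrt_sq (norm_nonneg _)).symm
        _ ≤ Real.sqrt ((p:ℝ) ^ ((((2*D:ℕ)):ℝ) - 1)) := Real.sqrt_le_sqrt h1
        _ = B := by
            rw [hBdef, Real.sqrt_eq_rpow, ← Real.rpow_mul hp0.le]
            congr 1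
            ring
    refine le_trans (Finset.sum_le_card_nsmul _ _ (B^n) helem) ?_
    rw [nsmul_eq_mul]
    apply mul_le_mul_of_nonneg_right _ (pow_nonneg hB0 n)
    have hcard := Finset.card_filter_le univ (fun lam : Fin t → ZMod p => ¬ φ lam = 0)
    rw [Finset.card_univ, Fintype.card_fun, ZMod.card, Fintype.card_fin] at hcard
    exact_mod_cast hcard
  calc ((p:ℝ)^(n*D))⁻¹ * (((p:ℝ)⁻¹)^t * ‖∑ lam ∈ univ.filter
        (fun lam : Fin t → ZMod p => ¬ φ lam = 0), tt c lam ^ n‖)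
      ≤ ((p:ℝ)^(n*D))⁻¹ * (((p:ℝ)⁻¹)^t * (((p:ℝ)^t) * B^n)) := by
        apply mul_le_mul_of_nonneg_left _ (by positivity)
        apply mul_le_mul_of_nonneg_left hsumb (by positivity)
    _ = ((p:ℝ)^(n*D))⁻¹ * B^n := by
        rw [inv_pow]
        field_simp
    _ = (p:ℝ) ^ (-(n:ℝ)/2) := by
        rw [hBdef, ← Real.rpow_natCast B n, hBdef, ← Real.rpow_mul hp0.le,
          ← Real.rpow_natCast (p:ℝ) (n*D), ← Real.rpow_neg hp0.le, ← Real.rpow_add hp0]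
        congr 1
        push_cast
        ring
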